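/- arXiv:1909.09387 — 4 statements merged into one kernel-verified Lean document; each statement's English description precedes it below -/
import Mathlib

section
/- Let H be an uncountable family of infinite, pairwise almost disjoint subsets of ω, let (A_n)_{n∈ω} be an antichain in a Boolean algebra A such that the supremum ⋁_{n∈H} A_n exists in A for every H ∈ H. Then for every sequence (μ_k)_{k∈ω} of finitely additive measures of finite variation on A, there exists H_0 ∈ H such that for every k ∈ ω, μ_k(⋁_{n∈H_0} A_n) = Σ_{n∈H_0} μ_k(A_n). -/
/-- A finitely additive complex-valued function on a Boolean algebra. -/
def FinAdd {α : Type*} [BooleanAlgebra α] (μ : α → ℂ) : Prop :=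
  ∀ a b : α, Disjoint a b → μ (a ⊔ b) = μ a + μ b

/-- The set of sums `∑_{a ∈ s} |μ a|` over finite pairwise-disjoint families `s`. -/
def PartitionSums {α : Type*} [BooleanAlgebra α] (μ : α → ℂ) : Set ℝ :=
  {x | ∃ s : Finset α, (∀ a ∈ s, ∀ b ∈ s, a ≠ b → Disjoint a b) ∧
    x = ∑ a ∈ s, ‖μ a‖}

/-- `v` is the (finite) variation norm `‖μ‖` of `μ`. -/
def HasVariation {α : Type*} [BooleanAlgebra α] (μ : α → ℂ) (v : ℝ) : Prop :=
  IsLUB (PartitionSums μ) v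

section Aux
variable {α : Type*} [BooleanAlgebra α]

lemma finAdd_bot {μ : α → ℂ} (h : FinAdd μ) : μ ⊥ = 0 := by
  have h2 := h ⊥ ⊥ disjoint_bot_left
  rw [sup_idem] at h2
  exact left_eq_add.mp h2

lemma finAdd_sdiff {μ : α → ℂ} (h : FinAdd μ) {a b : α} (hba : b ≤ a) :
    μ a = μ b + μ (a \ b) := by
  have h2 := h b (a \ b) disjoint_sdiff_self_right
  rwa [sup_sdiff_cancel' le_rfl hba] at h2

lemma finAdd_sup {μ : α → ℂ} (h : FinAdd μ) (A : ℕ → α)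
    (hA : ∀ n m, n ≠ m → Disjoint (A n) (A m)) (t : Finset ℕ) :
    μ (t.sup A) = ∑ n ∈ t, μ (A n) := by
  classical
  induction t using Finset.induction_on with
  | empty => simpa using finAdd_bot h
  | insert _ _ ha ih =>
    rename_i a t
    rw [Finset.sup_insert, Finset.sum_insert ha, ← ih]
    exact h _ _ (Finset.disjoint_sup_right.mpr fun n hn =>
      hA a n (by rintro rfl; exact ha hn))

lemma sum_le_var {μ : α → ℂ} {v : ℝ} (hv : HasVariation μ v) (s : Finset α)
    (hd : ∀ a ∈ s, ∀ b ∈ s, a ≠ b → Disjoint a b) :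
    ∑ a ∈ s, ‖μ a‖ ≤ v :=
  hv.1 ⟨s, hd, rfl⟩

lemma sum_abs_le_var {μ : α → ℂ} {v : ℝ} (h : FinAdd μ) (hv : HasVariation μ v)
    (A : ℕ → α) (hA : ∀ n m, n ≠ m → Disjoint (A n) (A m)) (t : Finset ℕ) :
    ∑ n ∈ t, ‖μ (A n)‖ ≤ v := by
  classical
  have h1 : ∑ n ∈ t.filter (fun n => A n ≠ ⊥), ‖μ (A n)‖
      = ∑ n ∈ t, ‖μ (A n)‖ := by
    refine Finset.sum_filter_of_ne ?_
    intro n _ hne hbot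
    exact hne (by rw [hbot, finAdd_bot h]; simp)
  have hinj : ∀ x ∈ t.filter (fun n => A n ≠ ⊥), ∀ y ∈ t.filter (fun n => A n ≠ ⊥),
      A x = A y → x = y := by
    intro n hn m hm hnm
    by_contra hne
    have hd := hA n m hne
    rw [hnm, disjoint_self] at hd
    exact (Finset.mem_filter.mp hm).2 hd
  have h2 : ∑ a ∈ (t.filter (fun n => A n ≠ ⊥)).image A, ‖μ a‖
      = ∑ n ∈ t.filter (fun n => A n ≠ ⊥), ‖μ (A n)‖ :=
    Finset.sum_image hinj
  rw [← h1, ← h2]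
  apply sum_le_var hv
  intro a ha b hb hab
  obtain ⟨n, hn, rfl⟩ := Finset.mem_image.mp ha
  obtain ⟨m, hm, rfl⟩ := Finset.mem_image.mp hb
  exact hA n m (fun e => hab (e ▸ rfl))

lemma summable_muA {μ : α → ℂ} {v : ℝ} (h : FinAdd μ) (hv : HasVariation μ v)
    (A : ℕ → α) (hA : ∀ n m, n ≠ m → Disjoint (A n) (A m)) (H : Set ℕ) :
    Summable (fun n : H => μ (A n)) := by
  classical
  apply Summable.of_norm
  apply summable_of_sum_le (c := v) (fun n => norm_nonneg _)
  intro u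
  calc ∑ x ∈ u, ‖μ (A ↑x)‖
      = ∑ n ∈ u.image Subtype.val, ‖μ (A n)‖ := by
        rw [Finset.sum_image (fun x _ y _ e => Subtype.val_injective e)]
    _ ≤ v := sum_abs_le_var h hv A hA _

lemma isLUB_inf_left {S : Set α} {s : α} (h : IsLUB S s) (a : α) :
    IsLUB ((a ⊓ ·) '' S) (a ⊓ s) := by
  constructor
  · rintro x ⟨y, hy, rfl⟩
    exact inf_le_inf_left a (h.1 hy)
  · intro u hu
    have hs : s ≤ u ⊔ aᶜ := by
      apply h.2
      intro x hx
      have hxu : a ⊓ x ≤ u := hu ⟨x, hx, rfl⟩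
      calc x = a ⊓ x ⊔ aᶜ ⊓ x := by rw [← inf_sup_right, sup_compl_eq_top, top_inf_eq]
        _ ≤ u ⊔ aᶜ := sup_le_sup hxu inf_le_left
    calc a ⊓ s ≤ a ⊓ (u ⊔ aᶜ) := inf_le_inf_left a hs
      _ = a ⊓ u ⊔ a ⊓ aᶜ := inf_sup_left a u aᶜ
      _ ≤ u := by rw [inf_compl_eq_bot, sup_bot_eq]; exact inf_le_right

lemma lub_inf_lub_le {A : ℕ → α} (hA : ∀ n m, n ≠ m → Disjoint (A n) (A m))
    {H H' : Set ℕ} {s s' : α} (hs : IsLUB (A '' H) s) (hs' : IsLUB (A '' H') s')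
    {F : Finset ℕ} (hF : H ∩ H' ⊆ ↑F) : s ⊓ s' ≤ F.sup A := by
  apply (isLUB_inf_left hs' s).2
  rintro x ⟨y, ⟨m, hm, rfl⟩, rfl⟩
  by_cases hmH : m ∈ H
  · exact inf_le_right.trans (Finset.le_sup (hF ⟨hmH, hm⟩))
  · have hb : A m ⊓ s ≤ ⊥ := by
      apply (isLUB_inf_left hs (A m)).2
      rintro x ⟨y, ⟨n, hn, rfl⟩, rfl⟩
      exact le_of_eq (disjoint_iff.mp (hA m n (fun e => hmH (e ▸ hn))))
    calc s ⊓ A m = A m ⊓ s := inf_comm ..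
      _ ≤ ⊥ := hb
      _ ≤ _ := bot_le

lemma exists_tail_piece {μ : α → ℂ} {v : ℝ} (h : FinAdd μ) (hv : HasVariation μ v)
    {A : ℕ → α} (hA : ∀ n m, n ≠ m → Disjoint (A n) (A m))
    {H : Set ℕ} {s : α} (hs : IsLUB (A '' H) s) {ε : ℝ} (hε : 0 < ε)
    (hd : ε < ‖μ s - ∑' n : H, μ (A n)‖) (F₀ : Finset ℕ) :
    ∃ G : Finset ℕ, ↑G ⊆ H ∧ (∀ n ∈ F₀, n ∈ H → n ∈ G) ∧
      ε / 2 < ‖μ (s \ G.sup A)‖ := by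
  classical
  have hsum : Summable (fun n : H => μ (A n)) := summable_muA h hv A hA H
  set S := ∑' n : H, μ (A n) with hS
  have hHasSum : HasSum (fun n : H => μ (A n)) S := hsum.hasSum
  rw [HasSum, SummationFilter.unconditional_filter, Metric.tendsto_atTop] at hHasSum
  obtain ⟨u, hu⟩ := hHasSum (ε / 2) (by linarith)
  set w : Finset H := u ∪ (F₀.subtype (· ∈ H)) with hw
  have hw2 := hu w le_sup_left
  rw [Complex.dist_eq] at hw2
  set G := w.image Subtype.val with hG
  have hGH : ↑G ⊆ H := by
    rintro n hn
    obtain ⟨x, _, rfl⟩ := Finset.mem_image.mp hn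
    exact x.2
  have hF₀G : ∀ n ∈ F₀, n ∈ H → n ∈ G := by
    intro n hn hnH
    exact Finset.mem_image.mpr ⟨⟨n, hnH⟩,
      Finset.mem_union_right _ (Finset.mem_subtype.mpr hn), rfl⟩
  have hsumG : ∑ n ∈ G, μ (A n) = ∑ x ∈ w, μ (A ↑x) :=
    Finset.sum_image (fun x _ y _ e => Subtype.val_injective e)
  have hle : G.sup A ≤ s := Finset.sup_le fun n hn => hs.1 ⟨n, hGH hn, rfl⟩
  have hsplit := finAdd_sdiff h hle
  have e1 : μ (G.sup A) = ∑ x ∈ w, μ (A ↑x) := by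
    rw [finAdd_sup h A hA G, hsumG]
  have key : μ (s \ G.sup A) = (μ s - S) - (∑ x ∈ w, μ (A ↑x) - S) := by
    linear_combination -hsplit - e1
  refine ⟨G, hGH, hF₀G, ?_⟩
  calc ε / 2 = ε - ε / 2 := by ring
    _ < ‖μ s - S‖ - ‖∑ x ∈ w, μ (A ↑x) - S‖ :=
        sub_lt_sub hd hw2
    _ ≤ ‖(μ s - S) - (∑ x ∈ w, μ (A ↑x) - S)‖ := by
        exact norm_sub_norm_le _ _
    _ = ‖μ (s \ G.sup A)‖ := by rw [key]

end Aux

/-- Given an uncountable almost disjoint family `𝓗` of infinite subsets of `ω`, an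
antichain `(A_n)` in a Boolean algebra whose suprema along members of `𝓗` exist,
and a sequence `(μ_k)` of finitely additive measures of finite variation, there is
`H₀ ∈ 𝓗` with `μ_k(⋁_{n ∈ H₀} A_n) = ∑_{n ∈ H₀} μ_k(A_n)` for every `k`. -/
theorem stmt3 {α : Type*} [BooleanAlgebra α]
    (𝓗 : Set (Set ℕ)) (hunc : ¬𝓗.Countable)
    (hinf : ∀ H ∈ 𝓗, H.Infinite)
    (had : ∀ H₁ ∈ 𝓗, ∀ H₂ ∈ 𝓗, H₁ ≠ H₂ → (H₁ ∩ H₂).Finite)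
    (A : ℕ → α) (hA : ∀ n m, n ≠ m → Disjoint (A n) (A m))
    (hsup : ∀ H ∈ 𝓗, ∃ s : α, IsLUB (A '' H) s)
    (μ : ℕ → α → ℂ) (hadd : ∀ k, FinAdd (μ k))
    (hvar : ∀ k, ∃ v : ℝ, HasVariation (μ k) v) :
    ∃ H₀ ∈ 𝓗, ∀ k : ℕ, ∀ s : α, IsLUB (A '' H₀) s →
      μ k s = ∑' n : H₀, μ k (A n) := by
  classical
  have hchoice : ∀ H : Set ℕ, ∃ s : α, H ∈ 𝓗 → IsLUB (A '' H) s := by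
    intro H
    by_cases hH : H ∈ 𝓗
    · obtain ⟨s, hs⟩ := hsup H hH; exact ⟨s, fun _ => hs⟩
    · exact ⟨⊥, fun h => absurd h hH⟩
  choose sH hsH using hchoice
  choose vk hvk using hvar
  set d : ℕ → Set ℕ → ℝ :=
    fun k H => ‖μ k (sH H) - ∑' n : H, μ k (A n)‖ with hd
  set Bad : ℕ → ℕ → Set (Set ℕ) :=
    fun k m => {H ∈ 𝓗 | 1 / (m + 1 : ℝ) < d k H} with hBad
  have hBadFin : ∀ k m, (Bad k m).Finite := by
    intro k m
    set ε : ℝ := 1 / (m + 1 : ℝ) with hε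
    have hεpos : 0 < ε := by positivity
    by_contra hinfB
    obtain ⟨N, hN⟩ := exists_nat_gt (vk k / (ε / 2))
    obtain ⟨T, hT, hTcard⟩ := Set.Infinite.exists_subset_card_eq hinfB N
    have hT𝓗 : ∀ H ∈ T, H ∈ 𝓗 := fun H hH => (hT hH).1
    have hTd : ∀ H ∈ T, ε < d k H := fun H hH => (hT hH).2
    -- the finite set of all pairwise intersections
    have hF₀fin : {n : ℕ | ∃ H1 ∈ T, ∃ H2 ∈ T, H1 ≠ H2 ∧ n ∈ H1 ∧ n ∈ H2}.Finite := by
      have hsub : {n : ℕ | ∃ H1 ∈ T, ∃ H2 ∈ T, H1 ≠ H2 ∧ n ∈ H1 ∧ n ∈ H2} ⊆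
          ⋃ H1 ∈ (T : Set (Set ℕ)), ⋃ H2 ∈ (T : Set (Set ℕ)),
            (if H1 = H2 then (∅ : Set ℕ) else H1 ∩ H2) := by
        rintro n ⟨H1, h1, H2, h2, hne, hn1, hn2⟩
        refine Set.mem_biUnion h1 (Set.mem_biUnion h2 ?_)
        rw [if_neg hne]; exact ⟨hn1, hn2⟩
      refine Set.Finite.subset ?_ hsub
      refine Set.Finite.biUnion T.finite_toSet (fun H1 h1 =>
        Set.Finite.biUnion T.finite_toSet (fun H2 h2 => ?_))
      split_ifs with he
      · exact Set.finite_empty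
      · exact had H1 (hT𝓗 H1 h1) H2 (hT𝓗 H2 h2) he
    set F₀ := hF₀fin.toFinset with hF₀
    have hGex : ∀ H : Set ℕ, ∃ G : Finset ℕ, H ∈ T →
        (↑G ⊆ H ∧ (∀ n ∈ F₀, n ∈ H → n ∈ G) ∧
          ε / 2 < ‖μ k (sH H \ G.sup A)‖) := by
      intro H
      by_cases hH : H ∈ T
      · obtain ⟨G, hG⟩ := exists_tail_piece (hadd k) (hvk k) hA
          (hsH H (hT𝓗 H hH)) hεpos (hTd H hH) F₀
        exact ⟨G, fun _ => hG⟩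
      · exact ⟨∅, fun h => absurd h hH⟩
    choose G hG using hGex
    set b : Set ℕ → α := fun H => sH H \ (G H).sup A with hb
    have hbd : ∀ H ∈ T, ε / 2 < ‖μ k (b H)‖ := fun H hH => (hG H hH).2.2
    have hdisj : ∀ H1 ∈ T, ∀ H2 ∈ T, H1 ≠ H2 → Disjoint (b H1) (b H2) := by
      intro H1 h1 H2 h2 hne
      have hss : sH H1 ⊓ sH H2 ≤ (G H1).sup A := by
        refine lub_inf_lub_le hA (hsH H1 (hT𝓗 H1 h1)) (hsH H2 (hT𝓗 H2 h2)) ?_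
        intro n hn
        have hnF : n ∈ F₀ := hF₀fin.mem_toFinset.mpr ⟨H1, h1, H2, h2, hne, hn.1, hn.2⟩
        exact (hG H1 h1).2.1 n hnF hn.1
      rw [disjoint_iff]
      have h1' : b H1 ⊓ b H2 ≤ (G H1).sup A :=
        le_trans (inf_le_inf sdiff_le sdiff_le) hss
      have h2' : b H1 ⊓ b H2 ≤ ((G H1).sup A)ᶜ := by
        refine le_trans inf_le_left ?_
        show sH H1 \ (G H1).sup A ≤ ((G H1).sup A)ᶜ
        rw [sdiff_eq]
        exact inf_le_right
      have := le_inf h1' h2'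
      rw [inf_compl_eq_bot] at this
      exact le_bot_iff.mp this
    have hne_bot : ∀ H ∈ T, b H ≠ ⊥ := by
      intro H hH hbot
      have h3 := hbd H hH
      rw [hbot, finAdd_bot (hadd k)] at h3
      simp at h3
      linarith
    have hbinj : ∀ H1 ∈ T, ∀ H2 ∈ T, b H1 = b H2 → H1 = H2 := by
      intro H1 h1 H2 h2 he
      by_contra hne
      have h4 := hdisj H1 h1 H2 h2 hne
      rw [he, disjoint_self] at h4
      exact hne_bot H2 h2 h4
    have hsumeq : ∑ a ∈ T.image b, ‖μ k a‖
        = ∑ H ∈ T, ‖μ k (b H)‖ := Finset.sum_image hbinj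
    have hge : (N : ℝ) * (ε / 2) ≤ ∑ H ∈ T, ‖μ k (b H)‖ := by
      calc (N : ℝ) * (ε / 2) = ∑ _H ∈ T, (ε / 2) := by
            rw [Finset.sum_const, hTcard, nsmul_eq_mul]
        _ ≤ _ := Finset.sum_le_sum fun H hH => le_of_lt (hbd H hH)
    have hlev : ∑ a ∈ T.image b, ‖μ k a‖ ≤ vk k := by
      apply sum_le_var (hvk k)
      intro a ha c hc hac
      obtain ⟨H1, h1, rfl⟩ := Finset.mem_image.mp ha
      obtain ⟨H2, h2, rfl⟩ := Finset.mem_image.mp hc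
      exact hdisj H1 h1 H2 h2 (fun e => hac (e ▸ rfl))
    have hv2 : vk k < N * (ε / 2) := by
      rw [div_lt_iff₀ (by positivity)] at hN
      linarith
    linarith
  have hcnt : (⋃ k, ⋃ m, Bad k m).Countable :=
    Set.countable_iUnion fun k => Set.countable_iUnion fun m => (hBadFin k m).countable
  obtain ⟨H₀, hH₀𝓗, hH₀⟩ : ∃ H₀ ∈ 𝓗, H₀ ∉ ⋃ k, ⋃ m, Bad k m := by
    by_contra hcon
    push_neg at hcon
    exact hunc (hcnt.mono hcon)
  refine ⟨H₀, hH₀𝓗, ?_⟩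
  intro k s hsLUB
  have hseq : s = sH H₀ := hsLUB.unique (hsH H₀ hH₀𝓗)
  have hdz : d k H₀ = 0 := by
    by_contra hne
    have hnn : 0 ≤ d k H₀ := by rw [hd]; exact norm_nonneg _
    have hpos : 0 < d k H₀ := hnn.lt_of_ne (Ne.symm hne)
    obtain ⟨m, hm⟩ := exists_nat_gt (1 / d k H₀)
    have hlt : 1 / (m + 1 : ℝ) < d k H₀ := by
      have h1 : 1 / d k H₀ < (m : ℝ) + 1 := hm.trans (lt_add_one _)
      rw [div_lt_iff₀ hpos] at h1
      rw [div_lt_iff₀ (by positivity)]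
      linarith [mul_comm ((m : ℝ) + 1) (d k H₀)]
    exact hH₀ (Set.mem_iUnion.mpr ⟨k, Set.mem_iUnion.mpr ⟨m, ⟨hH₀𝓗, hlt⟩⟩⟩)
  rw [hseq]
  have hz : μ k (sH H₀) - ∑' n : H₀, μ k (A n) = 0 := by
    have := hdz
    rw [hd] at this
    exact norm_eq_zero.mp this
  exact sub_eq_zero.mp hz
end

section
/- Let (C_n)_{n∈ω} be a partition of ω into infinite sets. Then for every infinite I ⊆ ω, the set S_n = {σ ∈ Sym(ω) : σ[C_n] ∩ I is finite} is a meager subset of Sym(ω) (with its Polish group topology as a subspace of ω^ω) for each n ∈ ω. -/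
open Topology Filter

/-- Let `(C_n)` be a partition of `ω` into infinite sets. For every infinite
`I ⊆ ω` and every `n`, the set `S_n = {σ ∈ Sym(ω) : σ[C_n] ∩ I is finite}` is a
meager subset of the symmetric group `Sym(ω)` (topologized as a subspace of the
Baire space `ω^ω`). -/
theorem stmt5 (C : ℕ → Set ℕ)
    (hCinf : ∀ n, (C n).Infinite)
    (hCdisj : ∀ n m, n ≠ m → Disjoint (C n) (C m))
    (hCcov : (⋃ n, C n) = Set.univ)
    (I : Set ℕ) (hI : I.Infinite) (n : ℕ) :
    IsMeagre {σ : {f : ℕ → ℕ // Function.Bijective f} | (σ.1 '' C n ∩ I).Finite} := by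
  set X := {f : ℕ → ℕ // Function.Bijective f}
  set A : ℕ → Set X := fun m => {σ : X | ∀ x ∈ C n, σ.1 x ∈ I → σ.1 x < m} with hA
  -- the target set is contained in the union of the A m
  have hsub : {σ : X | (σ.1 '' C n ∩ I).Finite} ⊆ ⋃ m, A m := by
    intro σ hσ
    obtain ⟨m, hm⟩ := hσ.bddAbove
    refine Set.mem_iUnion.2 ⟨m + 1, fun x hx hxI => ?_⟩
    have : σ.1 x ∈ σ.1 '' C n ∩ I := ⟨Set.mem_image_of_mem _ hx, hxI⟩
    exact Nat.lt_succ_of_le (hm this)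
  refine IsMeagre.mono hsub (isMeagre_iUnion fun m => ?_)
  -- each A m is closed
  have hclosed : IsClosed (A m) := by
    have : A m = ⋂ x ∈ C n, {σ : X | σ.1 x ∈ (I ∩ Set.Ici m)ᶜ} := by
      ext σ
      simp only [hA, Set.mem_setOf_eq, Set.mem_iInter, Set.mem_compl_iff, Set.mem_inter_iff,
        Set.mem_Ici, not_and, not_le]
    rw [this]
    refine isClosed_biInter fun x _ => IsClosed.preimage ?_ (isClosed_discrete _)
    exact (continuous_apply x).comp continuous_subtype_val
  -- A m has empty interior
  have hint : interior (A m) = ∅ := by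
    rw [Set.eq_empty_iff_forall_notMem]
    intro σ hσ
    have hnhds : A m ∈ 𝓝 σ := mem_interior_iff_mem_nhds.1 hσ
    rw [nhds_induced, Filter.mem_comap] at hnhds
    obtain ⟨V, hV, hVA⟩ := hnhds
    rw [nhds_pi, Filter.mem_pi] at hV
    obtain ⟨F, hF, t, ht, htV⟩ := hV
    -- pick x in C n outside F
    obtain ⟨x, hxC, hxF⟩ := ((hCinf n).diff hF).nonempty
    -- pick y in I avoiding a finite set
    have hfin : (σ.1 '' F ∪ {σ.1 x} ∪ Set.Iio m).Finite :=
      ((hF.image σ.1).union (Set.finite_singleton _)).union (Set.finite_Iio m)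
    obtain ⟨y, hyI, hy⟩ := (hI.diff hfin).nonempty
    simp only [Set.mem_union, Set.mem_singleton_iff, Set.mem_Iio, not_or, not_lt] at hy
    obtain ⟨⟨hyF, hyx⟩, hym⟩ := hy
    -- construct the modified permutation
    have hτbij : Function.Bijective (Equiv.swap (σ.1 x) y ∘ σ.1) :=
      (Equiv.swap (σ.1 x) y).bijective.comp σ.2
    set τ : X := ⟨Equiv.swap (σ.1 x) y ∘ σ.1, hτbij⟩ with hτ
    have hτA : τ ∈ A m := by
      apply hVA
      apply htV
      intro i hi
      have hne1 : σ.1 i ≠ σ.1 x := fun h => hxF (σ.2.1 h ▸ hi)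
      have hne2 : σ.1 i ≠ y := fun h => hyF (h ▸ Set.mem_image_of_mem _ hi)
      show (Equiv.swap (σ.1 x) y ∘ σ.1) i ∈ t i
      simp only [Function.comp_apply, Equiv.swap_apply_of_ne_of_ne hne1 hne2]
      exact mem_of_mem_nhds (ht i)
    have hτx : τ.1 x = y := by
      show (Equiv.swap (σ.1 x) y ∘ σ.1) x = y
      simp [Equiv.swap_apply_left]
    have := hτA x hxC (hτx ▸ hyI)
    rw [hτx] at this
    exact absurd this (not_lt.2 hym)
  -- conclude meagerness
  rw [isMeagre_iff_countable_union_isNowhereDense]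
  refine ⟨{A m}, ?_, Set.countable_singleton _, by simp⟩
  intro s hs
  rw [Set.mem_singleton_iff.1 hs]
  exact hclosed.isNowhereDense_iff.2 hint
end

section
/- Let (C_n)_{n∈ω} be a partition of ω into infinite sets, let I ⊆ ω be infinite, and suppose S ⊆ Sym(ω) is a non-meager subset of the symmetric group Sym(ω). Then there exists σ ∈ S such that σ[C_n] ∩ I is infinite for every n ∈ ω. -/
open Set Filter Topology

private abbrev X6 := {f : ℕ → ℕ // Function.Bijective f}

private def A6 (C : ℕ → Set ℕ) (I : Set ℕ) (n : ℕ) (F : Finset ℕ) : Set X6 :=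
  ⋂ x ∈ C n, {σ : X6 | σ.1 x ∈ I → σ.1 x ∈ (F : Set ℕ)}

private lemma A6_closed (C : ℕ → Set ℕ) (I : Set ℕ) (n : ℕ) (F : Finset ℕ) :
    IsClosed (A6 C I n F) := by
  refine isClosed_biInter fun x _ => ?_
  have hc : Continuous fun σ : X6 => σ.1 x :=
    (continuous_apply x).comp continuous_subtype_val
  have : {σ : X6 | σ.1 x ∈ I → σ.1 x ∈ (F : Set ℕ)} =
      (fun σ : X6 => σ.1 x) ⁻¹' {k | k ∈ I → k ∈ (F : Set ℕ)} := rfl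
  rw [this]
  exact (isClosed_discrete _).preimage hc

private lemma A6_int (C : ℕ → Set ℕ) (hCinf : ∀ n, (C n).Infinite)
    (I : Set ℕ) (hI : I.Infinite) (n : ℕ) (F : Finset ℕ) :
    interior (A6 C I n F) = ∅ := by
  by_contra h
  obtain ⟨σ, hσ⟩ := Set.nonempty_iff_ne_empty.mpr h
  have hA : A6 C I n F ∈ 𝓝 σ := mem_of_superset (isOpen_interior.mem_nhds hσ) interior_subset
  rw [nhds_subtype_eq_comap, Filter.mem_comap] at hA
  obtain ⟨V, hV, hVA⟩ := hA
  rw [nhds_pi, Filter.mem_pi'] at hV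
  obtain ⟨D, t, ht, htV⟩ := hV
  -- pick x₀ ∈ C n \ D
  obtain ⟨x₀, hx₀C, hx₀D⟩ := ((hCinf n).diff (D : Set ℕ).toFinite).nonempty
  -- pick y ∈ I outside F and outside σ '' D
  obtain ⟨y, hyI, hyout⟩ :=
    (hI.diff (((F : Set ℕ)).toFinite.union ((D : Set ℕ).toFinite.image σ.1))).nonempty
  rw [Set.mem_union, not_or] at hyout
  set a := σ.1 x₀ with ha
  have hbij : Function.Bijective (Equiv.swap a y ∘ σ.1) :=
    (Equiv.swap a y).bijective.comp σ.2
  set τ : X6 := ⟨Equiv.swap a y ∘ σ.1, hbij⟩ with hτ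
  have hτV : τ.1 ∈ V := by
    apply htV
    intro i hi
    have h1 : σ.1 i ≠ a := fun h => hx₀D (by
      have := σ.2.1 h
      simpa [this] using hi)
    have h2 : σ.1 i ≠ y := fun h => hyout.2 ⟨i, hi, h⟩
    have : τ.1 i = σ.1 i := by
      simp only [hτ, Function.comp_apply]
      exact Equiv.swap_apply_of_ne_of_ne h1 h2
    rw [this]
    exact mem_of_mem_nhds (ht i)
  have hτA : τ ∈ A6 C I n F := hVA hτV
  have := Set.mem_iInter₂.mp hτA x₀ hx₀C
  have hτx₀ : τ.1 x₀ = y := by simp [hτ, ha]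
  have h2 : τ.1 x₀ ∈ I → τ.1 x₀ ∈ (F : Set ℕ) := this
  rw [hτx₀] at h2
  exact hyout.1 (h2 hyI)

private lemma A6_meagre (C : ℕ → Set ℕ) (hCinf : ∀ n, (C n).Infinite)
    (I : Set ℕ) (hI : I.Infinite) (n : ℕ) :
    IsMeagre {σ : X6 | (σ.1 '' C n ∩ I).Finite} := by
  rw [isMeagre_iff_countable_union_isNowhereDense]
  refine ⟨Set.range (A6 C I n), ?_, Set.countable_range _, ?_⟩
  · rintro _ ⟨F, rfl⟩
    rw [(A6_closed C I n F).isNowhereDense_iff]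
    exact A6_int C hCinf I hI n F
  · intro σ hσ
    refine ⟨A6 C I n hσ.toFinset, ⟨hσ.toFinset, rfl⟩, ?_⟩
    refine Set.mem_iInter₂.mpr fun x hx hxI => ?_
    simp only [Set.Finite.coe_toFinset]
    exact ⟨⟨x, hx, rfl⟩, hxI⟩

/-- Let `(C_n)` be a partition of `ω` into infinite sets, `I ⊆ ω` infinite, and
`S` a non-meager subset of the symmetric group `Sym(ω)` (as a subspace of `ω^ω`).
Then some `σ ∈ S` satisfies: `σ[C_n] ∩ I` is infinite for every `n`. -/
theorem stmt6 (C : ℕ → Set ℕ)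
    (hCinf : ∀ n, (C n).Infinite)
    (hCdisj : ∀ n m, n ≠ m → Disjoint (C n) (C m))
    (hCcov : (⋃ n, C n) = Set.univ)
    (I : Set ℕ) (hI : I.Infinite)
    (S : Set {f : ℕ → ℕ // Function.Bijective f}) (hS : ¬IsMeagre S) :
    ∃ σ ∈ S, ∀ n, (σ.1 '' C n ∩ I).Infinite := by
  by_contra h
  push_neg at h
  apply hS
  refine IsMeagre.mono (hs := isMeagre_iUnion fun n => A6_meagre C hCinf I hI n) (hts := fun σ hσ => ?_)
  obtain ⟨n, hn⟩ := h σ hσ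
  have hn : (σ.1 '' C n ∩ I).Finite := hn
  exact Set.mem_iUnion.mpr ⟨n, hn⟩
end

section
/- Let A be a Boolean algebra, ε > 0, μ a complex finitely additive measure on A, (A_k)_{k≥1} elements of A, n ≥ 1, and define C_k = A_k \ ⋁_{0<i<k} A_i (i.e., C_k = A_k ∧ ¬(A_1 ∨ ... ∨ A_{k−1})). Suppose: (a) the supremum ⋁_{k∈H_0} C_k exists in A for an infinite set H_0 ∋ n; (b) μ(⋁_{k∈H_0} C_k) = Σ_{k∈H_0} μ(C_k); (c) |μ(A_n)| > 2ε; (d) |μ|(A_k) < ε/2^{k+2} for all k ≥ 1 with k ≠ n. Then |μ(⋁_{k∈H_0} C_k)| > ε. -/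
set_option maxHeartbeats 1000000


/-- The estimate in Case (G) of the main theorem: with `μ` finitely additive,
`ν = |μ|` its variation (nonnegative, finitely additive, monotone, dominating
`|μ(·)|`), `C_k = A_k \ ⋁_{0<i<k} A_i`, an infinite `H₀ ∋ n` (`0 ∉ H₀`, `n ≥ 1`)
with `s = ⋁_{k ∈ H₀} C_k` satisfying `μ(s) = ∑_{k ∈ H₀} μ(C_k)`, if
`|μ(A_n)| > 2ε` and `|μ|(A_k) < ε/2^{k+2}` for all `k ≥ 1`, `k ≠ n`, then
`|μ(s)| > ε`. -/
theorem stmt14 {α : Type*} [BooleanAlgebra α] (ε : ℝ) (hε : 0 < ε)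
    (μ : α → ℂ) (ν : α → ℝ)
    (hadd : FinAdd μ)
    (hdom : ∀ a : α, ‖μ a‖ ≤ ν a)
    (hnn : ∀ a : α, 0 ≤ ν a)
    (hνadd : ∀ a b : α, Disjoint a b → ν (a ⊔ b) = ν a + ν b)
    (hνmono : ∀ a b : α, a ≤ b → ν a ≤ ν b)
    (A : ℕ → α) (n : ℕ) (hn : 1 ≤ n)
    (C : ℕ → α) (hC : ∀ k, C k = A k \ (Finset.Ioo 0 k).sup A)
    (H₀ : Set ℕ) (hH₀ : H₀.Infinite) (hnH : n ∈ H₀) (h0 : 0 ∉ H₀)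
    (s : α) (hlub : IsLUB (C '' H₀) s)
    (hsum : Summable (fun k : H₀ => μ (C k)))
    (heq : μ s = ∑' k : H₀, μ (C k))
    (hAn : 2 * ε < ‖μ (A n)‖)
    (hsmall : ∀ k, 1 ≤ k → k ≠ n → ν (A k) < ε / 2^(k+2)) :
    ε < ‖μ s‖ := by
  classical
  -- basic facts about ν
  have hbot : ν ⊥ = 0 := by
    have h := hνadd ⊥ ⊥ disjoint_bot_left
    simp only [sup_idem] at h; linarith
  have hsub : ∀ a b : α, ν (a ⊔ b) ≤ ν a + ν b := by
    intro a b
    rw [← sup_sdiff_self_right a b, hνadd a (b \ a) disjoint_sdiff_self_right]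
    exact add_le_add_right (hνmono _ _ sdiff_le) _
  have hFsup : ∀ F : Finset ℕ, ν (F.sup A) ≤ ∑ i ∈ F, ν (A i) := by
    intro F
    induction F using Finset.induction with
    | empty => simp [hbot]
    | insert _ _ h ih =>
        rw [Finset.sup_insert, Finset.sum_insert h]
        exact le_trans (hsub _ _) (add_le_add_right ih _)
  -- the geometric bound
  have hgeq : (fun k : ℕ => ε / 2^(k+2)) = fun k : ℕ => (ε/4) * (1/2:ℝ)^k := by
    funext k; rw [div_pow, one_pow, pow_add]; ring
  have hg : Summable (fun k : ℕ => ε / 2^(k+2)) := by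
    rw [hgeq]; exact summable_geometric_two.mul_left _
  have hgsum : ∑' k : ℕ, ε / 2^(k+2) = ε/2 := by
    rw [hgeq, tsum_mul_left, tsum_geometric_two]; ring
  have hgnn : ∀ k : ℕ, 0 ≤ ε / 2^(k+2) := fun k => by positivity
  -- bound |μ (C n)| from below
  have hCn : 2 * ε - ε/2 < ‖μ (C n)‖ := by
    set B := (Finset.Ioo 0 n).sup A with hB
    have hdisj : Disjoint (A n ⊓ B) (A n \ B) :=
      (disjoint_sdiff_self_left (x := B) (y := A n)).symm.mono_left inf_le_right
    have hsplit : μ (A n) = μ (A n ⊓ B) + μ (C n) := by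
      rw [hC n, ← hB, ← hadd _ _ hdisj, sup_inf_sdiff]
    have h1 : ‖μ (A n ⊓ B)‖ ≤ ε/2 := by
      refine le_trans (hdom _) (le_trans (hνmono _ _ inf_le_right) ?_)
      refine le_trans (hFsup _) ?_
      calc ∑ i ∈ Finset.Ioo 0 n, ν (A i) ≤ ∑ i ∈ Finset.Ioo 0 n, ε / 2^(i+2) := by
            refine Finset.sum_le_sum fun i hi => ?_
            obtain ⟨hi1, hi2⟩ := Finset.mem_Ioo.mp hi
            exact le_of_lt (hsmall i hi1 (Nat.ne_of_lt hi2))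
        _ ≤ ∑' k : ℕ, ε / 2^(k+2) := Summable.sum_le_tsum _ (fun k _ => hgnn k) hg
        _ = ε/2 := hgsum
    have := norm_add_le (μ (A n ⊓ B)) (μ (C n))
    rw [← hsplit] at this
    linarith
  -- split the tsum at n
  set n₀ : H₀ := ⟨n, hnH⟩ with hn₀
  have hsplit := Summable.tsum_eq_add_tsum_ite hsum n₀
  -- the remainder bound
  have hb : ∀ x : H₀, ‖if x = n₀ then 0 else μ (C x)‖ ≤
      (if x = n₀ then 0 else ε / 2^((x:ℕ)+2)) := by
    intro x
    by_cases hx : x = n₀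
    · simp [hx]
    · simp only [hx, if_false]
      have hx1 : 1 ≤ (x : ℕ) := Nat.one_le_iff_ne_zero.mpr (fun h => h0 (h ▸ x.2))
      have hxn : (x : ℕ) ≠ n := fun h => hx (Subtype.ext h)
      refine le_of_lt (lt_of_le_of_lt (le_trans (hdom _) ?_) (hsmall _ hx1 hxn))
      rw [hC]; exact hνmono _ _ sdiff_le
  have hgsub : Summable (fun x : H₀ => ε / 2^((x:ℕ)+2)) := hg.subtype H₀
  have hbsum : Summable (fun x : H₀ => if x = n₀ then 0 else ε / 2^((x:ℕ)+2)) := by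
    refine Summable.of_nonneg_of_le (fun x => ?_) (fun x => ?_) hgsub
    · split <;> [exact le_refl 0; exact hgnn _]
    · split <;> [exact hgnn _; exact le_refl _]
  have hrem : ‖∑' x : H₀, if x = n₀ then 0 else μ (C x)‖ ≤ ε/2 := by
    have hsn : Summable (fun x : H₀ => ‖if x = n₀ then 0 else μ (C x)‖) :=
      Summable.of_nonneg_of_le (fun x => norm_nonneg _) hb hbsum
    calc ‖∑' x : H₀, if x = n₀ then 0 else μ (C x)‖
        ≤ ∑' x : H₀, ‖if x = n₀ then 0 else μ (C x)‖ := by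
          have h := norm_tsum_le_tsum_norm
            (f := fun x : H₀ => if x = n₀ then 0 else μ (C x))
            hsn
          exact h
      _ ≤ ∑' x : H₀, (if x = n₀ then 0 else ε / 2^((x:ℕ)+2)) := Summable.tsum_le_tsum hb hsn hbsum
      _ ≤ ∑' x : H₀, ε / 2^((x:ℕ)+2) := by
          refine Summable.tsum_le_tsum (fun x => ?_) hbsum hgsub
          split <;> [exact hgnn _; exact le_refl _]
      _ ≤ ∑' k : ℕ, ε / 2^(k+2) :=
          Summable.tsum_subtype_le (fun k : ℕ => ε / 2^(k+2)) H₀ hgnn hg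
      _ = ε/2 := hgsum
  -- conclude
  have habs : ‖μ (C n₀)‖ ≤ ‖μ s‖ +
      ‖∑' x : H₀, if x = n₀ then 0 else μ (C x)‖ := by
    have : μ (C n₀) = μ s - ∑' x : H₀, if x = n₀ then 0 else μ (C x) := by
      rw [heq, hsplit]; ring
    rw [this]
    exact le_trans (norm_sub_le _ _) (le_refl _)
  have : ‖μ (C (n₀ : ℕ))‖ = ‖μ (C n)‖ := rfl
  rw [this] at habs
  linarith
end
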